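/- For a 2×2 system with A = [[0, 1], [−a, −1/τ]], B = [0, 1/τ]ᵀ, C = [√c, 0] where a = (m/τ)λ > 0, c = αλ > 0, τ > 0: the solution X of the Lyapunov equation AᵀX + XA = −CᵀC yields BᵀXB = α/(2m). In particular this value is independent of λ and τ. -/

import Mathlib

open Matrix
theorem droop_mode_h2_norm
    (m τ lam α : ℝ) (hm : 0 < m) (hτ : 0 < τ) (hlam : 0 < lam) (hα : 0 < α)
    (A : Matrix (Fin 2) (Fin 2) ℝ) (B : Matrix (Fin 2) (Fin 1) ℝ) (C : Matrix (Fin 1) (Fin 2) ℝ)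
    (hA : A = !![0, 1; -((m / τ) * lam), -(1 / τ)])
    (hB : B = !![0; 1 / τ])
    (hC : C = !![Real.sqrt (α * lam), 0])
    (X : Matrix (Fin 2) (Fin 2) ℝ)
    (hX : Aᵀ * X + X * A = -(Cᵀ * C)) :
    (Bᵀ * X * B) 0 0 = α / (2 * m) := by
  subst hA hB hC
  have hs : Real.sqrt (α * lam) * Real.sqrt (α * lam) = α * lam :=
    Real.mul_self_sqrt (by positivity)
  have h00 := congrFun (congrFun hX 0) 0
  have h11 := congrFun (congrFun hX 1) 1
  simp [Matrix.mul_apply, Matrix.add_apply, Fin.sum_univ_two, Matrix.transpose_apply, Matrix.vecHead, Matrix.vecTail] at h00 h11 ⊢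
  rw [hs] at h00
  have hm' := hm.ne'
  have hτ' := hτ.ne'
  have hlam' := hlam.ne'
  field_simp at h00 h11 ⊢
  refine mul_left_cancel₀ hlam' ?_
  linear_combination (-(lam * τ):ℝ) * h00 - (m * lam) * h11
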